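/- Let ψ be a non-negative tripartite pure state on systems A, B, C with d_A = 2. Suppose the probabilities P_↑ = (ρ_A)_{0,0} and P_↓ = (ρ_A)_{1,1} are both nonzero, that ρ_AC = ρ_A ⊗ ρ_C, and that ρ_A(j) = ρ_A for every measurement outcome j on B with P_j > 0. Then the pair (d_C, t) with t = (ρ_A)_{0,1}/√(P_↑·P_↓) is feasible. -/

import Mathlib

open scoped BigOperators Kronecker
open scoped Classical

noncomputable def rhoA {dA dB dC : ℕ} (ψ : Fin dA × Fin dB × Fin dC → ℂ) :
    Matrix (Fin dA) (Fin dA) ℂ :=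
  Matrix.of fun i i' => ∑ j : Fin dB, ∑ k : Fin dC,
    ψ (i, j, k) * (starRingEnd ℂ) (ψ (i', j, k))

noncomputable def rhoC {dA dB dC : ℕ} (ψ : Fin dA × Fin dB × Fin dC → ℂ) :
    Matrix (Fin dC) (Fin dC) ℂ :=
  Matrix.of fun k k' => ∑ i : Fin dA, ∑ j : Fin dB,
    ψ (i, j, k) * (starRingEnd ℂ) (ψ (i, j, k'))

noncomputable def rhoAC {dA dB dC : ℕ} (ψ : Fin dA × Fin dB × Fin dC → ℂ) :
    Matrix (Fin dA × Fin dC) (Fin dA × Fin dC) ℂ :=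
  Matrix.of fun p q => ∑ j : Fin dB, ψ (p.1, j, p.2) * (starRingEnd ℂ) (ψ (q.1, j, q.2))

noncomputable def probB {dA dB dC : ℕ} (ψ : Fin dA × Fin dB × Fin dC → ℂ) (j : Fin dB) : ℝ :=
  ∑ i : Fin dA, ∑ k : Fin dC, Complex.normSq (ψ (i, j, k))

noncomputable def rhoAPost {dA dB dC : ℕ} (ψ : Fin dA × Fin dB × Fin dC → ℂ) (j : Fin dB) :
    Matrix (Fin dA) (Fin dA) ℂ :=
  Matrix.of fun i i' => (probB ψ j : ℂ)⁻¹ *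
    ∑ k : Fin dC, ψ (i, j, k) * (starRingEnd ℂ) (ψ (i', j, k))

def Normalized {dA dB dC : ℕ} (ψ : Fin dA × Fin dB × Fin dC → ℂ) : Prop :=
  ∑ i : Fin dA, ∑ j : Fin dB, ∑ k : Fin dC, Complex.normSq (ψ (i, j, k)) = 1

def NonNeg {dA dB dC : ℕ} (ψ : Fin dA × Fin dB × Fin dC → ℂ) : Prop :=
  ∀ x, 0 ≤ (ψ x).re ∧ (ψ x).im = 0

/-- The pair `(d, t)` is feasible: there are entrywise non-negative unit vectors `v, w ∈ ℝ^d`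
with inner product `t` and `2·|v|₁·|w|₁ ≤ t·(|v|₁² + |w|₁²)`. -/
def Feasible (d : ℕ) (t : ℝ) : Prop :=
  ∃ v w : Fin d → ℝ,
    (∀ k, 0 ≤ v k) ∧ (∀ k, 0 ≤ w k) ∧
    (∑ k, v k ^ 2) = 1 ∧ (∑ k, w k ^ 2) = 1 ∧
    (∑ k, v k * w k) = t ∧
    2 * (∑ k, |v k|) * (∑ k, |w k|) ≤ t * ((∑ k, |v k|) ^ 2 + (∑ k, |w k|) ^ 2)

theorem stmt4 {dB dC : ℕ} (ψ : Fin 2 × Fin dB × Fin dC → ℂ)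
    (hnorm : Normalized ψ) (hpos : NonNeg ψ)
    (hup : (rhoA ψ 0 0).re ≠ 0) (hdown : (rhoA ψ 1 1).re ≠ 0)
    (hfac : rhoAC ψ = rhoA ψ ⊗ₖ rhoC ψ)
    (hpost : ∀ j : Fin dB, 0 < probB ψ j → rhoAPost ψ j = rhoA ψ) :
    Feasible dC ((rhoA ψ 0 1).re / Real.sqrt ((rhoA ψ 0 0).re * (rhoA ψ 1 1).re)) := by

  classical
  set f : Fin 2 → Fin dB → Fin dC → ℝ := fun i j k => (ψ (i, j, k)).re with hfdef
  have hf0 : ∀ i j k, 0 ≤ f i j k := fun i j k => (hpos (i, j, k)).1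
  have hψx : ∀ x, ψ x = ((ψ x).re : ℂ) := by
    intro x
    have h := (hpos x).2
    apply Complex.ext <;> simp [h]
  have key : ∀ a b : Fin 2 × Fin dB × Fin dC,
      ψ a * (starRingEnd ℂ) (ψ b) = (((ψ a).re * (ψ b).re : ℝ) : ℂ) := by
    intro a b
    rw [hψx a, hψx b, Complex.conj_ofReal]
    exact (Complex.ofReal_mul _ _).symm
  set A : Fin 2 → Fin 2 → ℝ := fun i i' => ∑ j, ∑ k, f i j k * f i' j k with hAdef
  have hA : ∀ i i', rhoA ψ i i' = ((A i i' : ℝ) : ℂ) := by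
    intro i i'
    simp only [rhoA, Matrix.of_apply, key, hAdef, hfdef]
    push_cast
    rfl
  have hAre : ∀ i i', (rhoA ψ i i').re = A i i' := fun i i' => by
    rw [hA]; exact Complex.ofReal_re _
  set C : Fin dC → Fin dC → ℝ := fun k k' => ∑ i, ∑ j, f i j k * f i j k' with hCdef
  have hC : ∀ k k', rhoC ψ k k' = ((C k k' : ℝ) : ℂ) := by
    intro k k'
    simp only [rhoC, Matrix.of_apply, key, hCdef, hfdef]
    push_cast
    rfl
  -- factorization entrywise
  have h8 : ∀ (i i' : Fin 2) (k k' : Fin dC),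
      (∑ j, f i j k * f i' j k') = A i i' * C k k' := by
    intro i i' k k'
    have h := congrFun (congrFun hfac (i, k)) (i', k')
    simp only [rhoAC, Matrix.of_apply, Matrix.kroneckerMap_apply] at h
    rw [hA, hC] at h
    have hl : (∑ j, ψ (i, j, k) * (starRingEnd ℂ) (ψ (i', j, k')))
        = ((∑ j, f i j k * f i' j k' : ℝ) : ℂ) := by
      push_cast
      exact Finset.sum_congr rfl fun j _ => by rw [key]; push_cast; rfl
    rw [hl, ← Complex.ofReal_mul] at h
    exact_mod_cast h
  -- probabilities
  have hPdef : ∀ j, probB ψ j = ∑ i, ∑ k, f i j k ^ 2 := by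
    intro j
    unfold probB
    refine Finset.sum_congr rfl fun i _ => Finset.sum_congr rfl fun k _ => ?_
    have h2 := (hpos (i, j, k)).2
    rw [Complex.normSq_apply, h2]
    simp [hfdef]
    ring
  have hPnonneg : ∀ j, 0 ≤ probB ψ j := by
    intro j
    rw [hPdef]
    exact Finset.sum_nonneg fun i _ => Finset.sum_nonneg fun k _ => sq_nonneg _
  have hPsum : ∑ j, probB ψ j = 1 := by
    rw [← hnorm]
    unfold probB
    exact Finset.sum_comm
  -- post-measurement
  have h10 : ∀ j, 0 < probB ψ j → ∀ i i' : Fin 2,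
      (∑ k, f i j k * f i' j k) = probB ψ j * A i i' := by
    intro j hj i i'
    have h := congrFun (congrFun (hpost j hj) i) i'
    simp only [rhoAPost, Matrix.of_apply] at h
    rw [hA] at h
    have hl : (∑ k, ψ (i, j, k) * (starRingEnd ℂ) (ψ (i', j, k)))
        = ((∑ k, f i j k * f i' j k : ℝ) : ℂ) := by
      push_cast
      exact Finset.sum_congr rfl fun k _ => by rw [key]; push_cast; rfl
    rw [hl, ← Complex.ofReal_inv, ← Complex.ofReal_mul] at h
    have h' : (probB ψ j)⁻¹ * (∑ k, f i j k * f i' j k) = A i i' := by exact_mod_cast h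
    rw [inv_mul_eq_div, div_eq_iff hj.ne'] at h'
    rw [h', mul_comm]
  -- positivity constants
  have hA00 : 0 < A 0 0 := by
    rcases lt_or_eq_of_le (Finset.sum_nonneg fun j _ => Finset.sum_nonneg fun k _ =>
      mul_nonneg (hf0 0 j k) (hf0 0 j k) : (0:ℝ) ≤ A 0 0) with h | h
    · exact h
    · exact absurd (hAre 0 0 ▸ h.symm) hup
  have hA11 : 0 < A 1 1 := by
    rcases lt_or_eq_of_le (Finset.sum_nonneg fun j _ => Finset.sum_nonneg fun k _ =>
      mul_nonneg (hf0 1 j k) (hf0 1 j k) : (0:ℝ) ≤ A 1 1) with h | h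
    · exact h
    · exact absurd (hAre 1 1 ▸ h.symm) hdown
  have hA01 : 0 ≤ A 0 1 :=
    Finset.sum_nonneg fun j _ => Finset.sum_nonneg fun k _ =>
      mul_nonneg (hf0 0 j k) (hf0 1 j k)
  set Q : ℝ := Real.sqrt (A 0 0 * A 1 1) with hQdef
  have hQ : 0 < Q := Real.sqrt_pos.mpr (mul_pos hA00 hA11)
  set t : ℝ := A 0 1 / Q with htdef
  have hgoal_eq : (rhoA ψ 0 1).re / Real.sqrt ((rhoA ψ 0 0).re * (rhoA ψ 1 1).re) = t := by
    rw [hAre, hAre, hAre]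
  rw [hgoal_eq]
  set s : Fin 2 → Fin dB → ℝ := fun i j => ∑ k, f i j k with hsdef
  set S : ℝ := ∑ k, ∑ k', C k k' with hSdef
  have h9 : ∀ i i' : Fin 2, ∑ j, s i j * s i' j = A i i' * S := by
    intro i i'
    calc ∑ j, s i j * s i' j
        = ∑ j, ∑ k, ∑ k', f i j k * f i' j k' := by
          refine Finset.sum_congr rfl fun j _ => ?_
          rw [hsdef]
          exact Finset.sum_mul_sum _ _ _ _
      _ = ∑ k, ∑ k', ∑ j, f i j k * f i' j k' := by
          rw [Finset.sum_comm]
          exact Finset.sum_congr rfl fun k _ => Finset.sum_comm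
      _ = ∑ k, ∑ k', A i i' * C k k' := by
          exact Finset.sum_congr rfl fun k _ => Finset.sum_congr rfl fun k' _ => h8 i i' k k'
      _ = A i i' * S := by
          rw [hSdef, Finset.mul_sum]
          exact Finset.sum_congr rfl fun k _ => (Finset.mul_sum _ _ _).symm
  set E : Fin dB → ℝ := fun j =>
    t / A 0 0 * (s 0 j) ^ 2 + t / A 1 1 * (s 1 j) ^ 2 - 2 / Q * (s 0 j * s 1 j) with hEdef
  have e00 : ∑ j, (s 0 j) ^ 2 = A 0 0 * S := by
    simpa [sq] using h9 0 0
  have e11 : ∑ j, (s 1 j) ^ 2 = A 1 1 * S := by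
    simpa [sq] using h9 1 1
  have e01 : ∑ j, s 0 j * s 1 j = A 0 1 * S := h9 0 1
  have hEsum : ∑ j, E j = 0 := by
    have : ∑ j, E j = t / A 0 0 * (∑ j, (s 0 j) ^ 2) + t / A 1 1 * (∑ j, (s 1 j) ^ 2)
        - 2 / Q * (∑ j, s 0 j * s 1 j) := by
      rw [hEdef, Finset.sum_sub_distrib, Finset.sum_add_distrib, ← Finset.mul_sum,
        ← Finset.mul_sum, ← Finset.mul_sum]
    rw [this, e00, e11, e01, htdef]
    field_simp
    ring
  have hex : ∃ j, 0 < probB ψ j ∧ 0 ≤ E j := by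
    by_contra hcon
    push_neg at hcon
    have hne : ∃ j0, 0 < probB ψ j0 := by
      by_contra hc2
      push_neg at hc2
      have hle : ∑ j, probB ψ j ≤ 0 := Finset.sum_nonpos fun j _ => hc2 j
      rw [hPsum] at hle
      linarith
    obtain ⟨j0, hj0⟩ := hne
    have hEzero : ∀ j, ¬ 0 < probB ψ j → E j = 0 := by
      intro j hj
      have hP0 : probB ψ j = 0 := le_antisymm (not_lt.mp hj) (hPnonneg j)
      rw [hPdef] at hP0
      have hfz : ∀ i k, f i j k = 0 := by
        intro i k
        have h1 : ∑ k, f i j k ^ 2 = 0 :=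
          (Finset.sum_eq_zero_iff_of_nonneg fun i _ =>
            Finset.sum_nonneg fun k _ => sq_nonneg _).mp hP0 i (Finset.mem_univ i)
        have h2 : f i j k ^ 2 = 0 :=
          (Finset.sum_eq_zero_iff_of_nonneg fun k _ => sq_nonneg _).mp h1 k (Finset.mem_univ k)
        exact (pow_eq_zero_iff two_ne_zero).mp h2
      have hs0 : s 0 j = 0 := by rw [hsdef]; exact Finset.sum_eq_zero fun k _ => hfz 0 k
      have hs1 : s 1 j = 0 := by rw [hsdef]; exact Finset.sum_eq_zero fun k _ => hfz 1 k
      rw [hEdef]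
      simp [hs0, hs1]
    have hlt : ∑ j, E j < ∑ _j : Fin dB, (0:ℝ) := by
      refine Finset.sum_lt_sum (fun j _ => ?_) ⟨j0, Finset.mem_univ j0, hcon j0 hj0⟩
      by_cases h : 0 < probB ψ j
      · exact le_of_lt (hcon j h)
      · exact le_of_eq (hEzero j h)
    rw [hEsum] at hlt
    simp at hlt
  obtain ⟨j, hPj, hEj⟩ := hex
  set a : ℝ := Real.sqrt (probB ψ j * A 0 0) with hadef
  set b : ℝ := Real.sqrt (probB ψ j * A 1 1) with hbdef
  have hapos : 0 < a := Real.sqrt_pos.mpr (mul_pos hPj hA00)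
  have hbpos : 0 < b := Real.sqrt_pos.mpr (mul_pos hPj hA11)
  have ha2 : a ^ 2 = probB ψ j * A 0 0 := Real.sq_sqrt (mul_pos hPj hA00).le
  have hb2 : b ^ 2 = probB ψ j * A 1 1 := Real.sq_sqrt (mul_pos hPj hA11).le
  have hab : a * b = probB ψ j * Q := by
    rw [hadef, hbdef, ← Real.sqrt_mul (mul_pos hPj hA00).le]
    have : probB ψ j * A 0 0 * (probB ψ j * A 1 1) = probB ψ j ^ 2 * (A 0 0 * A 1 1) := by ring
    rw [this, Real.sqrt_mul (sq_nonneg _), Real.sqrt_sq hPj.le, hQdef]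
  have hsum00 : ∑ k, f 0 j k ^ 2 = probB ψ j * A 0 0 := by
    simpa [sq] using h10 j hPj 0 0
  have hsum11 : ∑ k, f 1 j k ^ 2 = probB ψ j * A 1 1 := by
    simpa [sq] using h10 j hPj 1 1
  have hsum01 : ∑ k, f 0 j k * f 1 j k = probB ψ j * A 0 1 := h10 j hPj 0 1
  refine ⟨fun k => f 0 j k / a, fun k => f 1 j k / b,
    fun k => div_nonneg (hf0 0 j k) hapos.le,
    fun k => div_nonneg (hf0 1 j k) hbpos.le, ?_, ?_, ?_, ?_⟩
  · simp only [div_pow]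
    rw [← Finset.sum_div, hsum00, ha2, div_self (mul_pos hPj hA00).ne']
  · simp only [div_pow]
    rw [← Finset.sum_div, hsum11, hb2, div_self (mul_pos hPj hA11).ne']
  · have : ∀ k, f 0 j k / a * (f 1 j k / b) = f 0 j k * f 1 j k / (a * b) := fun k => by
      rw [div_mul_div_comm]
    simp only [this]
    rw [← Finset.sum_div, hsum01, hab, htdef]
    rw [mul_div_mul_left _ _ hPj.ne']
  · have habs0 : (∑ k, |f 0 j k / a|) = s 0 j / a := by
      rw [hsdef, Finset.sum_div]
      exact Finset.sum_congr rfl fun k _ => abs_of_nonneg (div_nonneg (hf0 0 j k) hapos.le)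
    have habs1 : (∑ k, |f 1 j k / b|) = s 1 j / b := by
      rw [hsdef, Finset.sum_div]
      exact Finset.sum_congr rfl fun k _ => abs_of_nonneg (div_nonneg (hf0 1 j k) hbpos.le)
    rw [habs0, habs1]
    have hE' : 2 / Q * (s 0 j * s 1 j) ≤ t / A 0 0 * (s 0 j) ^ 2 + t / A 1 1 * (s 1 j) ^ 2 := by
      rw [hEdef] at hEj
      linarith
    have e1 : probB ψ j * (2 * (s 0 j / a) * (s 1 j / b)) = 2 / Q * (s 0 j * s 1 j) := by
      field_simp
      rw [show s 0 j * a * s 1 j * b = s 0 j * s 1 j * (a * b) by ring, hab]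
      ring
    have e2 : probB ψ j * (t * ((s 0 j / a) ^ 2 + (s 1 j / b) ^ 2))
        = t / A 0 0 * (s 0 j) ^ 2 + t / A 1 1 * (s 1 j) ^ 2 := by
      simp only [div_pow]
      rw [ha2, hb2]
      field_simp
    have key3 : probB ψ j * (2 * (s 0 j / a) * (s 1 j / b))
        ≤ probB ψ j * (t * ((s 0 j / a) ^ 2 + (s 1 j / b) ^ 2)) := by
      rw [e1, e2]; exact hE'
    exact le_of_mul_le_mul_left key3 hPj
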